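/- (Bollobás set-pair inequality) Let (A_i, B_i) for i in a finite index set I be pairs of finite sets such that A_i ∩ B_i = ∅ for all i, and A_i ∩ B_j ≠ ∅ for all i ≠ j. Then the sum over i of 1 / C(|A_i| + |B_i|, |A_i|) is at most 1. -/

import Mathlib

open Finset

lemma bollobas_choose_key (a b : ℕ) (hb : 1 ≤ b) :
    b * (a + b).choose a = (a + b) * (a + b - 1).choose a := by
  obtain ⟨b', rfl⟩ := Nat.exists_eq_add_of_le hb
  have h1 : (a + (1 + b')).choose a = (a + b').succ.choose (b' + 1) := by
    have := Nat.choose_symm (n := a + b' + 1) (k := b' + 1) (by omega)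
    rw [← this]; congr 1 <;> omega
  have h2 : (a + (1 + b') - 1).choose a = (a + b').choose b' := by
    have := Nat.choose_symm (n := a + b') (k := b') (by omega)
    rw [← this]; congr 1 <;> omega
  have key := Nat.add_one_mul_choose_eq (a + b') b'
  rw [h1, h2]
  have : a + (1 + b') = (a + b').succ := by omega
  rw [this, key]
  simp only [Nat.succ_eq_add_one]
  ring

lemma bollobas_term_le_one {α : Type*} (A B : Finset α) :
    (1 : ℚ) / ((A.card + B.card).choose A.card) ≤ 1 := by
  rw [div_le_one (by exact_mod_cast Nat.choose_pos (Nat.le_add_right _ _))]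
  exact_mod_cast Nat.choose_pos (Nat.le_add_right _ _)

lemma bollobas_aux (n : ℕ) : ∀ {α : Type u_1} [DecidableEq α] {I : Type u_2}
    (A B : I → Finset α) (J : Finset I),
    (∀ i ∈ J, A i ∩ B i = ∅) →
    (∀ i ∈ J, ∀ j ∈ J, i ≠ j → (A i ∩ B j).Nonempty) →
    (J.biUnion fun i => A i ∪ B i).card ≤ n →
    ∑ i ∈ J, (1 : ℚ) / ((A i).card + (B i).card).choose (A i).card ≤ 1 := by
  induction n with
  | zero =>
    intro α _ I A B J hdisj hcross hcard
    rcases le_or_gt J.card 1 with h1 | h1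
    · calc ∑ i ∈ J, (1 : ℚ) / ((A i).card + (B i).card).choose (A i).card
          ≤ ∑ _i ∈ J, (1 : ℚ) := sum_le_sum fun i _ => bollobas_term_le_one (A i) (B i)
        _ = J.card := by simp
        _ ≤ 1 := by exact_mod_cast h1
    · exfalso
      obtain ⟨i, hi, j, hj, hij⟩ := Finset.one_lt_card.1 h1
      obtain ⟨y, hy⟩ := hcross i hi j hj hij
      have hyU : y ∈ J.biUnion fun i => A i ∪ B i :=
        mem_biUnion.2 ⟨i, hi, mem_union_left _ (mem_inter.1 hy).1⟩
      rw [Finset.card_eq_zero.1 (Nat.le_zero.1 hcard)] at hyU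
      exact notMem_empty y hyU
  | succ n ih =>
    intro α _ I A B J hdisj hcross hcard
    rcases le_or_gt J.card 1 with h1 | h1
    · calc ∑ i ∈ J, (1 : ℚ) / ((A i).card + (B i).card).choose (A i).card
          ≤ ∑ _i ∈ J, (1 : ℚ) := sum_le_sum fun i _ => bollobas_term_le_one (A i) (B i)
        _ = J.card := by simp
        _ ≤ 1 := by exact_mod_cast h1
    set U : Finset α := J.biUnion fun i => A i ∪ B i with hUdef
    have hAU : ∀ i ∈ J, A i ⊆ U := fun i hi y hy =>
      mem_biUnion.2 ⟨i, hi, mem_union_left _ hy⟩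
    have hBU : ∀ i ∈ J, B i ⊆ U := fun i hi y hy =>
      mem_biUnion.2 ⟨i, hi, mem_union_right _ hy⟩
    have hBne : ∀ i ∈ J, (B i).Nonempty := by
      intro i hi
      obtain ⟨j, hj, hji⟩ := Finset.exists_mem_ne h1 i
      obtain ⟨y, hy⟩ := hcross j hj i hi hji
      exact ⟨y, (mem_inter.1 hy).2⟩
    have hUne : U.Nonempty := by
      obtain ⟨i, hi, _, _, _⟩ := Finset.one_lt_card.1 h1
      obtain ⟨y, hy⟩ := hBne i hi
      exact ⟨y, hBU i hi hy⟩
    set g : α → I → ℚ := fun x i =>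
      (1 : ℚ) / (((A i).card + ((B i).erase x).card).choose (A i).card) with hgdef
    -- Step 1: induction hypothesis applied at each x ∈ U
    have step1 : ∀ x ∈ U, ∑ i ∈ J.filter (fun i => x ∉ A i), g x i ≤ 1 := by
      intro x hx
      apply ih A (fun i => (B i).erase x) (J.filter fun i => x ∉ A i)
      · intro i hi
        have hsub : A i ∩ (B i).erase x ⊆ A i ∩ B i :=
          inter_subset_inter (le_refl _) (erase_subset _ _)
        rw [hdisj i (mem_filter.1 hi).1] at hsub
        exact subset_empty.1 hsub
      · intro i hi j hj hne
        obtain ⟨y, hy⟩ := hcross i (mem_filter.1 hi).1 j (mem_filter.1 hj).1 hne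
        have hyA := (mem_inter.1 hy).1
        have hyB := (mem_inter.1 hy).2
        exact ⟨y, mem_inter.2 ⟨hyA,
          mem_erase.2 ⟨fun h => (mem_filter.1 hi).2 (h ▸ hyA), hyB⟩⟩⟩
      · have hsub : ((J.filter fun i => x ∉ A i).biUnion
            fun i => A i ∪ (B i).erase x) ⊆ U.erase x := by
          intro y hy
          obtain ⟨i, hi, hyi⟩ := mem_biUnion.1 hy
          rcases mem_union.1 hyi with h | h
          · exact mem_erase.2 ⟨fun he => (mem_filter.1 hi).2 (he ▸ h),
              hAU i (mem_filter.1 hi).1 h⟩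
          · exact mem_erase.2 ⟨(mem_erase.1 h).1,
              hBU i (mem_filter.1 hi).1 (mem_erase.1 h).2⟩
        have := card_le_card hsub
        rw [card_erase_of_mem hx] at this
        omega
    -- Step 2: per-index exact computation
    have step2 : ∀ i ∈ J, ∑ x ∈ U.filter (fun x => x ∉ A i), g x i =
        U.card * ((1 : ℚ) / (((A i).card + (B i).card).choose (A i).card)) := by
      intro i hi
      have hABsub : A i ∪ B i ⊆ U := union_subset (hAU i hi) (hBU i hi)
      have hABdisj : Disjoint (A i) (B i) := disjoint_iff_inter_eq_empty.2 (hdisj i hi)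
      have hsplit : U.filter (fun x => x ∉ A i) = (U \ (A i ∪ B i)) ∪ B i := by
        ext y
        simp only [mem_filter, mem_sdiff, mem_union]
        constructor
        · rintro ⟨hyU, hyA⟩
          by_cases hyB : y ∈ B i
          · exact Or.inr hyB
          · exact Or.inl ⟨hyU, fun h => h.elim hyA hyB⟩
        · rintro (⟨hyU, hy⟩ | hyB)
          · exact ⟨hyU, fun h => hy (Or.inl h)⟩
          · exact ⟨hBU i hi hyB, fun h => (disjoint_left.1 hABdisj h) hyB⟩
      have hdisj2 : Disjoint (U \ (A i ∪ B i)) (B i) :=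
        disjoint_left.2 fun y hy hyB => (mem_sdiff.1 hy).2 (mem_union_right _ hyB)
      rw [hsplit, sum_union hdisj2]
      have hval1 : ∀ x ∈ U \ (A i ∪ B i),
          g x i = (1 : ℚ) / (((A i).card + (B i).card).choose (A i).card) := by
        intro x hx
        have : x ∉ B i := fun h => (mem_sdiff.1 hx).2 (mem_union_right _ h)
        simp only [hgdef, erase_eq_of_notMem this]
      have hval2 : ∀ x ∈ B i,
          g x i = (1 : ℚ) / (((A i).card + ((B i).card - 1)).choose (A i).card) := by
        intro x hx
        simp only [hgdef, card_erase_of_mem hx]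
      rw [sum_congr rfl hval1, sum_congr rfl hval2, sum_const, sum_const]
      have hb : 1 ≤ (B i).card := card_pos.2 (hBne i hi)
      have hcardsd : (U \ (A i ∪ B i)).card = U.card - ((A i).card + (B i).card) := by
        rw [card_sdiff_of_subset hABsub, card_union_of_disjoint hABdisj]
      have hABle : (A i).card + (B i).card ≤ U.card := by
        rw [← card_union_of_disjoint hABdisj]
        exact card_le_card hABsub
      have hkey : ((B i).card : ℚ) *
          ((1 : ℚ) / (((A i).card + ((B i).card - 1)).choose (A i).card)) =
          (((A i).card : ℚ) + (B i).card) *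
          ((1 : ℚ) / (((A i).card + (B i).card).choose (A i).card)) := by
        have e1 : (A i).card + ((B i).card - 1) = (A i).card + (B i).card - 1 := by omega
        rw [e1]
        have hpos1 : 0 < (((A i).card + (B i).card - 1).choose (A i).card) :=
          Nat.choose_pos (by omega)
        have hpos2 : 0 < (((A i).card + (B i).card).choose (A i).card) :=
          Nat.choose_pos (by omega)
        rw [mul_one_div, mul_one_div, div_eq_div_iff
          (by exact_mod_cast hpos1.ne') (by exact_mod_cast hpos2.ne')]
        exact_mod_cast bollobas_choose_key (A i).card (B i).card hb
      rw [nsmul_eq_mul, nsmul_eq_mul, hkey, hcardsd]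
      have : ((U.card - ((A i).card + (B i).card) : ℕ) : ℚ)
          = (U.card : ℚ) - ((A i).card + (B i).card) := by
        push_cast [Nat.cast_sub hABle]
        ring
      rw [this]
      ring
    -- Combine
    have hU0 : (0 : ℚ) < U.card := by exact_mod_cast card_pos.2 hUne
    have chain : (U.card : ℚ) *
        (∑ i ∈ J, (1 : ℚ) / ((A i).card + (B i).card).choose (A i).card) ≤ U.card := by
      calc (U.card : ℚ) * ∑ i ∈ J, (1 : ℚ) / ((A i).card + (B i).card).choose (A i).card
          = ∑ i ∈ J, (U.card : ℚ) *
            ((1 : ℚ) / ((A i).card + (B i).card).choose (A i).card) := mul_sum _ _ _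
        _ = ∑ i ∈ J, ∑ x ∈ U.filter (fun x => x ∉ A i), g x i :=
            (sum_congr rfl fun i hi => (step2 i hi).symm)
        _ = ∑ i ∈ J, ∑ x ∈ U, if x ∉ A i then g x i else 0 :=
            sum_congr rfl fun i _ => sum_filter _ _
        _ = ∑ x ∈ U, ∑ i ∈ J, if x ∉ A i then g x i else 0 := Finset.sum_comm
        _ = ∑ x ∈ U, ∑ i ∈ J.filter (fun i => x ∉ A i), g x i :=
            sum_congr rfl fun x _ => (sum_filter _ _).symm
        _ ≤ ∑ _x ∈ U, (1 : ℚ) := sum_le_sum step1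
        _ = U.card := by simp
    have chain' : (U.card : ℚ) *
        (∑ i ∈ J, (1 : ℚ) / ((A i).card + (B i).card).choose (A i).card) ≤
        (U.card : ℚ) * 1 := by rw [mul_one]; exact chain
    exact le_of_mul_le_mul_left chain' hU0

theorem stmt_5 {α : Type*} [DecidableEq α] {I : Type*} [Fintype I]
    (A B : I → Finset α)
    (hdisj : ∀ i, A i ∩ B i = ∅)
    (hcross : ∀ i j, i ≠ j → (A i ∩ B j).Nonempty) :
    ∑ i, (1 : ℚ) / ((A i).card + (B i).card).choose (A i).card ≤ 1 :=
  bollobas_aux (Finset.univ.biUnion fun i => A i ∪ B i).card A B Finset.univ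
    (fun i _ => hdisj i) (fun i _ j _ hij => hcross i j hij) le_rfl
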